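/- Let α₁, …, α₅ ∈ ℂ. There exist polynomials P₁, P₂, P₃ ∈ ℂ[X, Y, Z] (depending only on α₁,…,α₅) such that for every solution (x, y, z) of the modified reduced three-wave interaction system (2) on a connected open set U ⊆ ℂ with x nonvanishing, the functions x₂ = 1/x, y₂ = −(y + √−1·x + α₃)x, z₂ = (z + α₄)x satisfy dx₂/dt = P₁(x₂, y₂, z₂), dy₂/dt = P₂(x₂, y₂, z₂), dz₂/dt = P₃(x₂, y₂, z₂) on U. -/

import Mathlib

open Complex

noncomputable section

/-- A solution of the modified reduced three-wave interaction dynamical system (2)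
on a set `U ⊆ ℂ`, with parameters `α₁, …, α₅ : ℂ`. -/
def solMTWI (α₁ α₂ α₃ α₄ α₅ : ℂ) (x y z : ℂ → ℂ) (U : Set ℂ) : Prop :=
  ∀ t ∈ U,
    HasDerivAt x
      (-2 * (y t) ^ 2 - (α₁ + α₃ - 2 * α₅) * y t + z t
        + (α₂ + α₄ + 2 * (α₁ + α₃) * α₅) / 2) t ∧
    HasDerivAt y
      (2 * x t * y t - 2 * α₅ * x t + I * (α₁ - α₃) * y t
        - I * (α₂ - α₄ + 2 * (α₁ - α₃) * α₅) / 2) t ∧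
    HasDerivAt z
      (-2 * x t * z t - (α₂ + α₄) * x t + I * (α₂ - α₄) * y t
        - I * (α₁ - α₃) * z t + I * (α₂ * α₃ - α₁ * α₄)) t

set_option maxHeartbeats 1000000 in
theorem stmt13 (α₁ α₂ α₃ α₄ α₅ : ℂ) :
    ∃ P₁ P₂ P₃ : MvPolynomial (Fin 3) ℂ,
      ∀ (U : Set ℂ), IsOpen U → IsConnected U →
      ∀ x y z : ℂ → ℂ, solMTWI α₁ α₂ α₃ α₄ α₅ x y z U → (∀ t ∈ U, x t ≠ 0) →
      ∀ t ∈ U,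
        HasDerivAt (fun s => 1 / x s)
          (MvPolynomial.eval ![1 / x t, -(y t + I * x t + α₃) * x t, (z t + α₄) * x t] P₁) t ∧
        HasDerivAt (fun s => -(y s + I * x s + α₃) * x s)
          (MvPolynomial.eval ![1 / x t, -(y t + I * x t + α₃) * x t, (z t + α₄) * x t] P₂) t ∧
        HasDerivAt (fun s => (z s + α₄) * x s)
          (MvPolynomial.eval ![1 / x t, -(y t + I * x t + α₃) * x t, (z t + α₄) * x t] P₃) t := by
  classical
  refine ⟨MvPolynomial.C (-2) + MvPolynomial.C (I * (2 * α₅ + 3 * α₃ - α₁)) * MvPolynomial.X 0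
      + MvPolynomial.C ((α₄ - α₂) / 2 + (α₃ - α₁) * (α₅ + α₃)) * MvPolynomial.X 0 ^ 2
      + MvPolynomial.C (4 * I) * MvPolynomial.X 0 ^ 2 * MvPolynomial.X 1
      + MvPolynomial.C (2 * α₅ + 3 * α₃ - α₁) * MvPolynomial.X 0 ^ 3 * MvPolynomial.X 1
      - MvPolynomial.X 0 ^ 3 * MvPolynomial.X 2
      + MvPolynomial.C 2 * MvPolynomial.X 0 ^ 4 * MvPolynomial.X 1 ^ 2,
    MvPolynomial.C (I * (α₁ - α₃)) * MvPolynomial.X 1 - MvPolynomial.C I * MvPolynomial.X 2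
      - MvPolynomial.C ((α₄ - α₂) / 2 + (α₃ - α₁) * (α₅ + α₃)) * MvPolynomial.X 0 * MvPolynomial.X 1
      - MvPolynomial.C (2 * I) * MvPolynomial.X 0 * MvPolynomial.X 1 ^ 2
      - MvPolynomial.C (2 * α₅ + 3 * α₃ - α₁) * MvPolynomial.X 0 ^ 2 * MvPolynomial.X 1 ^ 2
      + MvPolynomial.X 0 ^ 2 * MvPolynomial.X 1 * MvPolynomial.X 2
      - MvPolynomial.C 2 * MvPolynomial.X 0 ^ 3 * MvPolynomial.X 1 ^ 3,
    MvPolynomial.C (I * (α₄ - α₂)) * MvPolynomial.X 1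
      - MvPolynomial.C (2 * I * (α₅ + α₃)) * MvPolynomial.X 2
      - MvPolynomial.C ((α₄ - α₂) / 2 + (α₃ - α₁) * (α₅ + α₃)) * MvPolynomial.X 0 * MvPolynomial.X 2
      - MvPolynomial.C (4 * I) * MvPolynomial.X 0 * MvPolynomial.X 1 * MvPolynomial.X 2
      - MvPolynomial.C (2 * α₅ + 3 * α₃ - α₁) * MvPolynomial.X 0 ^ 2 * MvPolynomial.X 1 * MvPolynomial.X 2
      + MvPolynomial.X 0 ^ 2 * MvPolynomial.X 2 ^ 2
      - MvPolynomial.C 2 * MvPolynomial.X 0 ^ 3 * MvPolynomial.X 1 ^ 2 * MvPolynomial.X 2,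
    ?_⟩
  intro U _ _ x y z hsol hx0 t ht
  obtain ⟨hx, hy, hz⟩ := hsol t ht
  have h0 := hx0 t ht
  have hu : 1 / x t * x t = 1 := one_div_mul_cancel h0
  have hI : I ^ 2 = -1 := Complex.I_sq
  simp only [MvPolynomial.eval_add, MvPolynomial.eval_sub, MvPolynomial.eval_mul,
    MvPolynomial.eval_pow, MvPolynomial.eval_C, MvPolynomial.eval_X,
    Matrix.cons_val_zero, Matrix.cons_val_one, Matrix.head_cons, Matrix.cons_val_two,
    Matrix.tail_cons]
  refine ⟨?_, ?_, ?_⟩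
  · refine ((hasDerivAt_const t (1 : ℂ)).div hx h0).congr_deriv ?_
    symm
    rw [eq_div_iff (pow_ne_zero 2 h0)]
    linear_combination (((-1 : ℂ)) * (z t) + ((2 : ℂ)) * (y t)^2 + ((2 : ℂ)) * (x t)^2 + ((-1 : ℂ)) * ((1/x t)) * (x t) * (z t) + ((2 : ℂ)) * ((1/x t)) * (x t) * (y t)^2 + ((2 : ℂ)) * ((1/x t)) * (x t)^3 + ((-1 : ℂ)) * ((1/x t))^2 * (x t)^2 * (z t) + ((2 : ℂ)) * ((1/x t))^2 * (x t)^2 * (y t)^2 + ((4 : ℂ)) * ((1/x t))^2 * (x t)^3 * (y t) * (I) + ((-2 : ℂ)) * ((1/x t))^2 * (x t)^4 + ((2 : ℂ)) * ((1/x t))^3 * (x t)^3 * (y t)^2 + ((4 : ℂ)) * ((1/x t))^3 * (x t)^4 * (y t) * (I) + ((-2 : ℂ)) * ((1/x t))^3 * (x t)^5 + ((-2 : ℂ)) * (α₅) * (y t) + ((-2 : ℂ)) * (α₅) * ((1/x t)) * (x t) * (y t) + ((-2 : ℂ)) * (α₅) * ((1/x t)) * (x t)^2 * (I) + ((-2 :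 ℂ)) * (α₅) * ((1/x t))^2 * (x t)^2 * (y t) + ((-2 : ℂ)) * (α₅) * ((1/x t))^2 * (x t)^3 * (I) + ((-1/2 : ℂ)) * (α₄) + ((-1/2 : ℂ)) * (α₄) * ((1/x t)) * (x t) + ((-1 : ℂ)) * (α₄) * ((1/x t))^2 * (x t)^2 + ((1 : ℂ)) * (α₃) * (y t) + ((1 : ℂ)) * (α₃) * ((1/x t)) * (x t) * (y t) + ((-3 : ℂ)) * (α₃) * ((1/x t)) * (x t)^2 * (I) + ((1 : ℂ)) * (α₃) * ((1/x t))^2 * (x t)^2 * (y t) + ((1 : ℂ)) * (α₃) * ((1/x t))^2 * (x t)^3 * (I) + ((4 : ℂ)) * (α₃) * ((1/x t))^3 * (x t)^3 * (y t) + ((4 : ℂ)) * (α₃) * ((1/x t))^3 * (x t)^4 * (I) + ((-1 : ℂ)) * (α₃) * (α₅) + ((-1 : ℂ)) * (α₃) * (α₅) * ((1/x t)) * (x t) + ((-2 : ℂ)) * (α₃) * (α₅) * ((1/x t))^2 * (x t)^2 + ((-1 : ℂ)) * (α₃)^2 * ((1/x t))^2 * (x t)^2 + ((2 : ℂ)) *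 (α₃)^2 * ((1/x t))^3 * (x t)^3 + ((-1/2 : ℂ)) * (α₂) + ((-1/2 : ℂ)) * (α₂) * ((1/x t)) * (x t) + ((1 : ℂ)) * (α₁) * (y t) + ((1 : ℂ)) * (α₁) * ((1/x t)) * (x t) * (y t) + ((1 : ℂ)) * (α₁) * ((1/x t)) * (x t)^2 * (I) + ((1 : ℂ)) * (α₁) * ((1/x t))^2 * (x t)^2 * (y t) + ((1 : ℂ)) * (α₁) * ((1/x t))^2 * (x t)^3 * (I) + ((-1 : ℂ)) * (α₁) * (α₅) + ((-1 : ℂ)) * (α₁) * (α₅) * ((1/x t)) * (x t) + ((1 : ℂ)) * (α₁) * (α₃) * ((1/x t))^2 * (x t)^2) * hu + (((-4 : ℂ)) * ((1/x t))^2 * (x t)^4 + ((2 : ℂ)) * ((1/x t))^4 * (x t)^6) * hI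
  · refine ((((hy.add ((hasDerivAt_const t I).mul hx)).add
        (hasDerivAt_const t α₃)).neg.mul hx)).congr_deriv ?_
    symm
    simp only [Pi.add_apply, Pi.neg_apply, Pi.mul_apply]
    linear_combination (((-1 : ℂ)) * (y t) * (z t) + ((2 : ℂ)) * (y t)^3 + ((-1 : ℂ)) * (x t) * (z t) * (I) + ((4 : ℂ)) * (x t) * (y t)^2 * (I) + ((-2 : ℂ)) * (x t)^2 * (y t) + ((-1 : ℂ)) * ((1/x t)) * (x t) * (y t) * (z t) + ((2 : ℂ)) * ((1/x t)) * (x t) * (y t)^3 + ((-1 : ℂ)) * ((1/x t)) * (x t)^2 * (z t) * (I) + ((6 : ℂ)) * ((1/x t)) * (x t)^2 * (y t)^2 * (I) + ((-6 : ℂ)) * ((1/x t)) * (x t)^3 * (y t) + ((-2 : ℂ)) * ((1/x t)) * (x t)^4 * (I) + ((2 : ℂ)) * ((1/x t))^2 * (x t)^2 * (y t)^3 + ((6 : ℂ)) * ((1/x t))^2 * (x t)^3 * (y t)^2 * (I) + ((-6 : ℂ)) * ((1/x t))^2 * (x t)^4 * (y t) + ((-2 : ℂ)) * ((1/x t))^2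 * (x t)^5 * (I) + ((-2 : ℂ)) * (α₅) * (y t)^2 + ((-4 : ℂ)) * (α₅) * (x t) * (y t) * (I) + ((2 : ℂ)) * (α₅) * (x t)^2 + ((-2 : ℂ)) * (α₅) * ((1/x t)) * (x t) * (y t)^2 + ((-4 : ℂ)) * (α₅) * ((1/x t)) * (x t)^2 * (y t) * (I) + ((2 : ℂ)) * (α₅) * ((1/x t)) * (x t)^3 + ((-1/2 : ℂ)) * (α₄) * (y t) + ((-1/2 : ℂ)) * (α₄) * (x t) * (I) + ((-1 : ℂ)) * (α₄) * ((1/x t)) * (x t) * (y t) + ((-1 : ℂ)) * (α₄) * ((1/x t)) * (x t)^2 * (I) + ((-1 : ℂ)) * (α₃) * (z t) + ((3 : ℂ)) * (α₃) * (y t)^2 + ((2 : ℂ)) * (α₃) * (x t) * (y t) * (I) + ((1 : ℂ)) * (α₃) * (x t)^2 + ((-1 : ℂ)) * (α₃) * ((1/x t)) * (x t) * (z t) + ((3 : ℂ)) * (α₃) * ((1/x t)) * (x t) * (y t)^2 + ((6 : ℂ)) * (α₃) * ((1/x t)) * (x t)^2 * (y t) * (I) + ((-3 : ℂ)) * (α₃)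 * ((1/x t)) * (x t)^3 + ((6 : ℂ)) * (α₃) * ((1/x t))^2 * (x t)^2 * (y t)^2 + ((12 : ℂ)) * (α₃) * ((1/x t))^2 * (x t)^3 * (y t) * (I) + ((-6 : ℂ)) * (α₃) * ((1/x t))^2 * (x t)^4 + ((-3 : ℂ)) * (α₃) * (α₅) * (y t) + ((-3 : ℂ)) * (α₃) * (α₅) * (x t) * (I) + ((-4 : ℂ)) * (α₃) * (α₅) * ((1/x t)) * (x t) * (y t) + ((-4 : ℂ)) * (α₃) * (α₅) * ((1/x t)) * (x t)^2 * (I) + ((-1/2 : ℂ)) * (α₃) * (α₄) + ((-1 : ℂ)) * (α₃) * (α₄) * ((1/x t)) * (x t) + ((1 : ℂ)) * (α₃)^2 * (y t) + ((-1 : ℂ)) * (α₃)^2 * (x t) * (I) + ((6 : ℂ)) * (α₃)^2 * ((1/x t))^2 * (x t)^2 * (y t) + ((6 : ℂ)) * (α₃)^2 * ((1/x t))^2 * (x t)^3 * (I) + ((-1 : ℂ)) * (α₃)^2 * (α₅) + ((-2 : ℂ)) * (α₃)^2 * (α₅) * ((1/x t)) * (x t) + ((-1 : ℂ)) * (α₃)^3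 * ((1/x t)) * (x t) + ((2 : ℂ)) * (α₃)^3 * ((1/x t))^2 * (x t)^2 + ((-1/2 : ℂ)) * (α₂) * (y t) + ((-1/2 : ℂ)) * (α₂) * (x t) * (I) + ((-1/2 : ℂ)) * (α₂) * (α₃) + ((1 : ℂ)) * (α₁) * (y t)^2 + ((2 : ℂ)) * (α₁) * (x t) * (y t) * (I) + ((-1 : ℂ)) * (α₁) * (x t)^2 + ((1 : ℂ)) * (α₁) * ((1/x t)) * (x t) * (y t)^2 + ((2 : ℂ)) * (α₁) * ((1/x t)) * (x t)^2 * (y t) * (I) + ((-1 : ℂ)) * (α₁) * ((1/x t)) * (x t)^3 + ((-1 : ℂ)) * (α₁) * (α₅) * (y t) + ((-1 : ℂ)) * (α₁) * (α₅) * (x t) * (I) + ((1 : ℂ)) * (α₁) * (α₃) * (y t) + ((1 : ℂ)) * (α₁) * (α₃) * (x t) * (I) + ((2 : ℂ)) * (α₁) * (α₃) * ((1/x t)) * (x t) * (y t) + ((2 : ℂ)) * (α₁) * (α₃) * ((1/x t)) * (x t)^2 * (I) + ((-1 : ℂ)) * (α₁) * (α₃) * (α₅) + ((1 : ℂ)) *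 (α₁) * (α₃)^2 * ((1/x t)) * (x t)) * hu + (((-4 : ℂ)) * ((1/x t)) * (x t)^3 * (y t) + ((-2 : ℂ)) * ((1/x t)) * (x t)^4 * (I) + ((6 : ℂ)) * ((1/x t))^3 * (x t)^5 * (y t) + ((2 : ℂ)) * ((1/x t))^3 * (x t)^6 * (I) + ((-2 : ℂ)) * (α₅) * ((1/x t))^2 * (x t)^4 + ((1 : ℂ)) * (α₃) * (x t)^2 + ((-4 : ℂ)) * (α₃) * ((1/x t)) * (x t)^3 + ((-3 : ℂ)) * (α₃) * ((1/x t))^2 * (x t)^4 + ((6 : ℂ)) * (α₃) * ((1/x t))^3 * (x t)^5 + ((-1 : ℂ)) * (α₁) * (x t)^2 + ((1 : ℂ)) * (α₁) * ((1/x t))^2 * (x t)^4) * hI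
  · refine ((hz.add (hasDerivAt_const t α₄)).mul hx).congr_deriv ?_
    symm
    simp only [Pi.add_apply, Pi.neg_apply, Pi.mul_apply]
    linear_combination (((1 : ℂ)) * (z t)^2 + ((-2 : ℂ)) * (y t)^2 * (z t) + ((-2 : ℂ)) * (x t)^2 * (z t) + ((1 : ℂ)) * ((1/x t)) * (x t) * (z t)^2 + ((-2 : ℂ)) * ((1/x t)) * (x t) * (y t)^2 * (z t) + ((-4 : ℂ)) * ((1/x t)) * (x t)^2 * (y t) * (z t) * (I) + ((2 : ℂ)) * ((1/x t)) * (x t)^3 * (z t) + ((-2 : ℂ)) * ((1/x t))^2 * (x t)^2 * (y t)^2 * (z t) + ((-4 : ℂ)) * ((1/x t))^2 * (x t)^3 * (y t) * (z t) * (I) + ((2 : ℂ)) * ((1/x t))^2 * (x t)^4 * (z t) + ((2 : ℂ)) * (α₅) * (y t) * (z t) + ((2 : ℂ)) * (α₅) * (x t) * (z t) * (I) + ((2 : ℂ)) * (α₅) * ((1/x t)) * (x t) * (y t) * (z t) + ((2 : ℂ)) * (α₅) * ((1/x t)) * (x t)^2 * (z t) * (I) + ((3/2 : ℂ)) * (α₄)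 * (z t) + ((-2 : ℂ)) * (α₄) * (y t)^2 + ((-2 : ℂ)) * (α₄) * (x t)^2 + ((2 : ℂ)) * (α₄) * ((1/x t)) * (x t) * (z t) + ((-2 : ℂ)) * (α₄) * ((1/x t)) * (x t) * (y t)^2 + ((-4 : ℂ)) * (α₄) * ((1/x t)) * (x t)^2 * (y t) * (I) + ((2 : ℂ)) * (α₄) * ((1/x t)) * (x t)^3 + ((-2 : ℂ)) * (α₄) * ((1/x t))^2 * (x t)^2 * (y t)^2 + ((-4 : ℂ)) * (α₄) * ((1/x t))^2 * (x t)^3 * (y t) * (I) + ((2 : ℂ)) * (α₄) * ((1/x t))^2 * (x t)^4 + ((2 : ℂ)) * (α₄) * (α₅) * (y t) + ((2 : ℂ)) * (α₄) * (α₅) * (x t) * (I) + ((2 : ℂ)) * (α₄) * (α₅) * ((1/x t)) * (x t) * (y t) + ((2 : ℂ)) * (α₄) * (α₅) * ((1/x t)) * (x t)^2 * (I) + ((1/2 : ℂ)) * (α₄)^2 + ((1 : ℂ)) * (α₄)^2 * ((1/x t)) * (x t) + ((-1 : ℂ)) * (α₃) * (y t) * (z t) + ((3 : ℂ)) * (α₃)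 * (x t) * (z t) * (I) + ((-1 : ℂ)) * (α₃) * ((1/x t)) * (x t) * (y t) * (z t) + ((-1 : ℂ)) * (α₃) * ((1/x t)) * (x t)^2 * (z t) * (I) + ((-4 : ℂ)) * (α₃) * ((1/x t))^2 * (x t)^2 * (y t) * (z t) + ((-4 : ℂ)) * (α₃) * ((1/x t))^2 * (x t)^3 * (z t) * (I) + ((1 : ℂ)) * (α₃) * (α₅) * (z t) + ((2 : ℂ)) * (α₃) * (α₅) * ((1/x t)) * (x t) * (z t) + ((-1 : ℂ)) * (α₃) * (α₄) * (y t) + ((3 : ℂ)) * (α₃) * (α₄) * (x t) * (I) + ((-1 : ℂ)) * (α₃) * (α₄) * ((1/x t)) * (x t) * (y t) + ((-1 : ℂ)) * (α₃) * (α₄) * ((1/x t)) * (x t)^2 * (I) + ((-4 : ℂ)) * (α₃) * (α₄) * ((1/x t))^2 * (x t)^2 * (y t) + ((-4 : ℂ)) * (α₃) * (α₄) * ((1/x t))^2 * (x t)^3 * (I) + ((1 : ℂ)) * (α₃) * (α₄) * (α₅) + ((2 : ℂ)) * (α₃) * (α₄) * (α₅) * ((1/x t)) * (x t) + ((1 :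 ℂ)) * (α₃)^2 * ((1/x t)) * (x t) * (z t) + ((-2 : ℂ)) * (α₃)^2 * ((1/x t))^2 * (x t)^2 * (z t) + ((1 : ℂ)) * (α₃)^2 * (α₄) * ((1/x t)) * (x t) + ((-2 : ℂ)) * (α₃)^2 * (α₄) * ((1/x t))^2 * (x t)^2 + ((1/2 : ℂ)) * (α₂) * (z t) + ((1/2 : ℂ)) * (α₂) * (α₄) + ((-1 : ℂ)) * (α₁) * (y t) * (z t) + ((-1 : ℂ)) * (α₁) * (x t) * (z t) * (I) + ((-1 : ℂ)) * (α₁) * ((1/x t)) * (x t) * (y t) * (z t) + ((-1 : ℂ)) * (α₁) * ((1/x t)) * (x t)^2 * (z t) * (I) + ((1 : ℂ)) * (α₁) * (α₅) * (z t) + ((-1 : ℂ)) * (α₁) * (α₄) * (y t) + ((-1 : ℂ)) * (α₁) * (α₄) * (x t) * (I) + ((-1 : ℂ)) * (α₁) * (α₄) * ((1/x t)) * (x t) * (y t) + ((-1 : ℂ)) * (α₁) * (α₄) * ((1/x t)) * (x t)^2 * (I) + ((1 : ℂ)) * (α₁) * (α₄) * (α₅) + ((-1 : ℂ)) * (α₁)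 * (α₃) * ((1/x t)) * (x t) * (z t) + ((-1 : ℂ)) * (α₁) * (α₃) * (α₄) * ((1/x t)) * (x t)) * hu + (((4 : ℂ)) * ((1/x t)) * (x t)^3 * (z t) + ((-2 : ℂ)) * ((1/x t))^3 * (x t)^5 * (z t) + ((-1 : ℂ)) * (α₄) * (x t)^2 + ((4 : ℂ)) * (α₄) * ((1/x t)) * (x t)^3 + ((-2 : ℂ)) * (α₄) * ((1/x t))^3 * (x t)^5 + ((1 : ℂ)) * (α₂) * (x t)^2) * hI
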